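/- Let σ̂_{i,j} be estimators of σ_{i,j} and define the thresholded values σ̃_{i,j} = σ̂_{i,j}·1{|σ̂_{i,j}| ≥ β t}. Suppose for each (i,j) that |σ̂_{i,j} - σ_{i,j}| ≤ 4 min{|σ_{i,j}|, α t} and the true matrix satisfies ∑_j |σ_{i,j}|^q ≤ c_p for each i, with 0 ≤ q < 1 and α > 0. Then max_i ∑_{j} |σ̃_{i,j} - σ_{i,j}| ≤ 8 α^{1-q} c_p t^{1-q}. -/
import Mathlib

lemma min_le_rpow_mul_rpow {a b q : ℝ} (ha : 0 ≤ a) (hb : 0 ≤ b)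
    (hq0 : 0 ≤ q) (hq1 : q ≤ 1) : min a b ≤ a ^ q * b ^ (1 - q) := by
  have hm : 0 ≤ min a b := le_min ha hb
  have h1 : (min a b) ^ q * (min a b) ^ (1 - q) = min a b := by
    rw [← Real.rpow_add' hm (by linarith)]
    simp
  calc min a b = (min a b) ^ q * (min a b) ^ (1 - q) := h1.symm
    _ ≤ a ^ q * b ^ (1 - q) :=
      mul_le_mul (Real.rpow_le_rpow hm (min_le_left a b) hq0)
        (Real.rpow_le_rpow hm (min_le_right a b) (by linarith))
        (Real.rpow_nonneg hm _) (Real.rpow_nonneg ha _)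

/-- thresholded estimator σ̃_{i,j} = σ̂_{i,j}·1{|σ̂_{i,j}| ≥ β t}; if
|σ̃_{i,j} - σ_{i,j}| ≤ 4 min{|σ_{i,j}|, α t} entrywise and rows of σ have ℓ^q norm at most
c_p (0 ≤ q < 1), then every row-sum error of σ̃ is at most 8 α^{1-q} c_p t^{1-q}. -/
theorem stmt9 (p : ℕ) (hatS S tilde : Matrix (Fin p) (Fin p) ℝ) (q cp t α β : ℝ)
    (hq0 : 0 ≤ q) (hq1 : q < 1) (ht : 0 < t) (hα : 0 < α)
    (hrow : ∀ i, ∑ j : Fin p, |S i j| ^ q ≤ cp)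
    (htilde : ∀ i j, tilde i j = if β * t ≤ |hatS i j| then hatS i j else 0)
    (herr : ∀ i j, |tilde i j - S i j| ≤ 4 * min |S i j| (α * t)) :
    ∀ i, ∑ j : Fin p, |tilde i j - S i j| ≤ 8 * α ^ (1 - q) * cp * t ^ (1 - q) := by
  intro i
  have hat : 0 ≤ α * t := by positivity
  have hC : (0:ℝ) ≤ α ^ (1 - q) * t ^ (1 - q) := by positivity
  have key : ∀ j, |tilde i j - S i j| ≤ 8 * (α ^ (1 - q) * t ^ (1 - q)) * |S i j| ^ q := by
    intro j
    have h1 := herr i j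
    have h2 : min |S i j| (α * t) ≤ |S i j| ^ q * (α * t) ^ (1 - q) :=
      min_le_rpow_mul_rpow (abs_nonneg _) hat hq0 hq1.le
    have h3 : (α * t) ^ (1 - q) = α ^ (1 - q) * t ^ (1 - q) :=
      Real.mul_rpow hα.le ht.le
    have h4 : 0 ≤ |S i j| ^ q := Real.rpow_nonneg (abs_nonneg _) _
    nlinarith [h4, hC, mul_nonneg h4 hC]
  calc ∑ j : Fin p, |tilde i j - S i j|
      ≤ ∑ j : Fin p, 8 * (α ^ (1 - q) * t ^ (1 - q)) * |S i j| ^ q :=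
        Finset.sum_le_sum fun j _ => key j
    _ = 8 * (α ^ (1 - q) * t ^ (1 - q)) * ∑ j : Fin p, |S i j| ^ q := by
        rw [Finset.mul_sum]
    _ ≤ 8 * (α ^ (1 - q) * t ^ (1 - q)) * cp := by
        apply mul_le_mul_of_nonneg_left (hrow i) (by positivity)
    _ = 8 * α ^ (1 - q) * cp * t ^ (1 - q) := by ring
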